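/- Let X be a real Banach space, θ = (k_r) a lacunary sequence, and ∑ x_i a series in X. the following are equivalent: (1) ∑ x_i is weakly unconditionally Cauchy; (2) the space S_{N_θ}(∑ x_i) = {(a_i) ∈ ℓ_∞ : the partial sums of ∑ a_i x_i are N_θ-summable}, endowed with the supremum norm, is complete; (3) c_0 ⊆ S_{N_θ}(∑ x_i), i.e. for every sequence (a_i) of reals converging to 0, the sequence of partial sums S_k = ∑_{i=1}^k a_i x_i is N_θ-summable to some L ∈ X. -/

import Mathlib

set_option maxHeartbeats 1000000
set_option synthInstance.maxHeartbeats 400000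


open Filter Finset
open scoped Classical

/-- `θ` is a lacunary sequence: `θ 0 = 0`, `θ` is strictly increasing and
`h_r = θ (r+1) - θ r → ∞`.  (Intervals `I_r = (θ r, θ (r+1)]`.) -/
def IsLacunary (θ : ℕ → ℕ) : Prop :=
  θ 0 = 0 ∧ StrictMono θ ∧ Tendsto (fun r => θ (r + 1) - θ r) atTop atTop

/-- `x` is strongly lacunary (`N_θ`) summable to `L`. -/
def NthetaSummable {X : Type*} [NormedAddCommGroup X] (θ : ℕ → ℕ) (x : ℕ → X) (L : X) : Prop :=
  Tendsto (fun r => (1 / (θ (r + 1) - θ r : ℝ)) * ∑ k ∈ Finset.Ioc (θ r) (θ (r + 1)), ‖x k - L‖)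
    atTop (nhds 0)

/-- `x` is lacunary statistically (`S_θ`) convergent to `L`. -/
def SthetaConvergent {X : Type*} [NormedAddCommGroup X] (θ : ℕ → ℕ) (x : ℕ → X) (L : X) : Prop :=
  ∀ ε > (0 : ℝ),
    Tendsto (fun r => (1 / (θ (r + 1) - θ r : ℝ)) *
      (((Finset.Ioc (θ r) (θ (r + 1))).filter (fun k => ε ≤ ‖x k - L‖)).card : ℝ))
      atTop (nhds 0)

/-- The series `∑ x i` is weakly unconditionally Cauchy: `∑ |f (x i)| < ∞`
for every continuous linear functional `f`. -/
def WUCSeries {X : Type*} [NormedAddCommGroup X] [NormedSpace ℝ X] (x : ℕ → X) : Prop :=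
  ∀ f : X →L[ℝ] ℝ, Summable fun i => |f (x i)|

/-- The `N_θ`-summability space of the series `∑ x i`, viewed as a subset of `ℓ∞`
(with the supremum norm): bounded scalar sequences `a` for which the partial sums of
`∑ a i • x i` are `N_θ`-summable to some element of `X`. -/
def NthetaSummabilitySpace {X : Type*} [NormedAddCommGroup X] [NormedSpace ℝ X]
    (θ : ℕ → ℕ) (x : ℕ → X) : Set (lp (fun _ : ℕ => ℝ) ⊤) :=
  {a | ∃ L : X, NthetaSummable θ (fun n => ∑ i ∈ Finset.range n, a i • x i) L}


section AvgAux

variable {θ : ℕ → ℕ}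

private lemma lac_lt (hθ : IsLacunary θ) (r : ℕ) : θ r < θ (r + 1) :=
  hθ.2.1 (Nat.lt_succ_self r)

private lemma lac_pos (hθ : IsLacunary θ) (r : ℕ) : (0 : ℝ) < (θ (r + 1) : ℝ) - θ r :=
  sub_pos.2 (by exact_mod_cast lac_lt hθ r)

private lemma lac_card (hθ : IsLacunary θ) (r : ℕ) :
    ((Finset.Ioc (θ r) (θ (r + 1))).card : ℝ) = (θ (r + 1) : ℝ) - θ r := by
  rw [Nat.card_Ioc, Nat.cast_sub (lac_lt hθ r).le]

/-- The block average of a sequence of reals. -/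
private noncomputable def lacAvg (θ : ℕ → ℕ) (r : ℕ) (t : ℕ → ℝ) : ℝ :=
  (1 / ((θ (r + 1) : ℝ) - θ r)) * ∑ k ∈ Finset.Ioc (θ r) (θ (r + 1)), t k

private lemma lacAvg_const (hθ : IsLacunary θ) (r : ℕ) (c : ℝ) :
    lacAvg θ r (fun _ => c) = c := by
  have h0 := (lac_pos hθ r).ne'
  rw [lacAvg, Finset.sum_const, nsmul_eq_mul, lac_card hθ r]
  field_simp

private lemma lacAvg_mono (hθ : IsLacunary θ) (r : ℕ) {t s : ℕ → ℝ}
    (h : ∀ k ∈ Finset.Ioc (θ r) (θ (r + 1)), t k ≤ s k) :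
    lacAvg θ r t ≤ lacAvg θ r s :=
  mul_le_mul_of_nonneg_left (Finset.sum_le_sum h)
    (by have := lac_pos hθ r; positivity)

private lemma lacAvg_nonneg (hθ : IsLacunary θ) (r : ℕ) {t : ℕ → ℝ}
    (h : ∀ k ∈ Finset.Ioc (θ r) (θ (r + 1)), 0 ≤ t k) : 0 ≤ lacAvg θ r t := by
  have := lac_pos hθ r
  exact mul_nonneg (by positivity) (Finset.sum_nonneg h)

private lemma lacAvg_add (θ : ℕ → ℕ) (r : ℕ) (t s : ℕ → ℝ) :
    lacAvg θ r (fun k => t k + s k) = lacAvg θ r t + lacAvg θ r s := by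
  rw [lacAvg, lacAvg, lacAvg, Finset.sum_add_distrib, mul_add]

private lemma lacAvg_le_of_forall_le (hθ : IsLacunary θ) (r : ℕ) {t : ℕ → ℝ} {ε : ℝ}
    (h : ∀ k ∈ Finset.Ioc (θ r) (θ (r + 1)), t k ≤ ε) : lacAvg θ r t ≤ ε := by
  calc lacAvg θ r t ≤ lacAvg θ r (fun _ => ε) := lacAvg_mono hθ r h
  _ = ε := lacAvg_const hθ r ε

private lemma exists_le_lacAvg (hθ : IsLacunary θ) (r : ℕ) (t : ℕ → ℝ) :
    ∃ k ∈ Finset.Ioc (θ r) (θ (r + 1)), t k ≤ lacAvg θ r t := by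
  have hne : (Finset.Ioc (θ r) (θ (r + 1))).Nonempty :=
    Finset.nonempty_Ioc.2 (lac_lt hθ r)
  apply Finset.exists_le_of_sum_le hne
  have h0 := (lac_pos hθ r).ne'
  rw [Finset.sum_const, nsmul_eq_mul, lac_card hθ r, lacAvg]
  field_simp
  exact le_rfl

private lemma ntheta_iff {X : Type*} [NormedAddCommGroup X] (θ : ℕ → ℕ) (y : ℕ → X) (L : X) :
    NthetaSummable θ y L ↔
      Tendsto (fun r => lacAvg θ r (fun k => ‖y k - L‖)) atTop (nhds 0) := Iff.rfl

private lemma ntheta_of_tendsto {X : Type*} [NormedAddCommGroup X] (hθ : IsLacunary θ)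
    {y : ℕ → X} {L : X} (h : Tendsto y atTop (nhds L)) : NthetaSummable θ y L := by
  rw [ntheta_iff]
  rw [Metric.tendsto_atTop]
  intro ε hε
  obtain ⟨N, hN⟩ := (Metric.tendsto_atTop.1 h) (ε / 2) (by positivity)
  refine ⟨N, fun r hr => ?_⟩
  have hnn : 0 ≤ lacAvg θ r (fun k => ‖y k - L‖) :=
    lacAvg_nonneg hθ r (fun k _ => norm_nonneg _)
  have hle : lacAvg θ r (fun k => ‖y k - L‖) ≤ ε / 2 := by
    apply lacAvg_le_of_forall_le hθ r
    intro k hk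
    have hk1 : θ r < k := (Finset.mem_Ioc.1 hk).1
    have hk2 : N ≤ k := le_trans hr (le_trans hθ.2.1.le_apply hk1.le)
    have := hN k hk2
    rw [dist_eq_norm] at this
    exact this.le
  rw [Real.dist_eq, sub_zero, abs_of_nonneg hnn]
  linarith

private lemma ntheta_unique {X : Type*} [NormedAddCommGroup X] (hθ : IsLacunary θ)
    {y : ℕ → X} {L M : X} (h1 : NthetaSummable θ y L) (h2 : NthetaSummable θ y M) : L = M := by
  rw [ntheta_iff] at h1 h2
  have key : ∀ r, ‖L - M‖ ≤ lacAvg θ r (fun k => ‖y k - L‖) + lacAvg θ r (fun k => ‖y k - M‖) := by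
    intro r
    calc ‖L - M‖ = lacAvg θ r (fun _ => ‖L - M‖) := (lacAvg_const hθ r _).symm
    _ ≤ lacAvg θ r (fun k => ‖y k - L‖ + ‖y k - M‖) := by
        apply lacAvg_mono hθ r
        intro k _
        calc ‖L - M‖ = ‖(L - y k) + (y k - M)‖ := by abel_nf
        _ ≤ ‖L - y k‖ + ‖y k - M‖ := norm_add_le _ _
        _ = ‖y k - L‖ + ‖y k - M‖ := by rw [norm_sub_rev]
    _ = _ := lacAvg_add θ r _ _
  have : ‖L - M‖ ≤ 0 := by
    have hlim : Tendsto (fun r => lacAvg θ r (fun k => ‖y k - L‖) +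
        lacAvg θ r (fun k => ‖y k - M‖)) atTop (nhds 0) := by
      have := h1.add h2
      simpa using this
    exact le_of_tendsto_of_tendsto' tendsto_const_nhds hlim key
  have : ‖L - M‖ = 0 := le_antisymm this (norm_nonneg _)
  exact sub_eq_zero.1 (norm_eq_zero.1 this)

end AvgAux


section Bound

variable {X : Type*} [NormedAddCommGroup X] [NormedSpace ℝ X]

private lemma wuc_bound {x : ℕ → X} (hx : WUCSeries x) :
    ∃ H : ℝ, 0 ≤ H ∧ ∀ (a : ℕ → ℝ) (C : ℝ), 0 ≤ C → (∀ i, |a i| ≤ C) →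
      ∀ n, ‖∑ i ∈ Finset.range n, a i • x i‖ ≤ H * C := by
  classical
  set cl : ℝ → ℝ := fun t => max (-1) (min 1 t) with hcl
  have habs : ∀ t, |cl t| ≤ 1 := by
    intro t
    rw [abs_le]
    exact ⟨le_max_left _ _, max_le (by norm_num) (min_le_left _ _)⟩
  have hcleq : ∀ t : ℝ, |t| ≤ 1 → cl t = t := by
    intro t ht
    rw [abs_le] at ht
    simp only [hcl]
    rw [min_eq_right ht.2, max_eq_right ht.1]
  set g : (ℕ × (ℕ → ℝ)) → (StrongDual ℝ X) →L[ℝ] ℝ := fun p =>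
    ∑ i ∈ Finset.range p.1, cl (p.2 i) • NormedSpace.inclusionInDoubleDual ℝ X (x i) with hg
  have hgapp : ∀ p (f : StrongDual ℝ X),
      g p f = ∑ i ∈ Finset.range p.1, cl (p.2 i) * f (x i) := by
    intro p f
    rw [hg]
    simp [ContinuousLinearMap.sum_apply, NormedSpace.dual_def]
  have hpt : ∀ f : StrongDual ℝ X, ∃ C, ∀ p, ‖g p f‖ ≤ C := by
    intro f
    refine ⟨∑' i, |f (x i)|, fun p => ?_⟩
    rw [hgapp]
    calc ‖∑ i ∈ Finset.range p.1, cl (p.2 i) * f (x i)‖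
        ≤ ∑ i ∈ Finset.range p.1, ‖cl (p.2 i) * f (x i)‖ := norm_sum_le _ _
      _ ≤ ∑ i ∈ Finset.range p.1, |f (x i)| := by
          apply Finset.sum_le_sum
          intro i _
          rw [Real.norm_eq_abs, abs_mul]
          calc |cl (p.2 i)| * |f (x i)| ≤ 1 * |f (x i)| :=
            mul_le_mul_of_nonneg_right (habs _) (abs_nonneg _)
          _ = |f (x i)| := one_mul _
      _ ≤ ∑' i, |f (x i)| := Summable.sum_le_tsum _ (fun i _ => abs_nonneg _) (hx f)
  obtain ⟨H, hH⟩ := banach_steinhaus hpt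
  have H0 : 0 ≤ max H 0 := le_max_right _ _
  -- unit case
  have unit : ∀ (a : ℕ → ℝ), (∀ i, |a i| ≤ 1) →
      ∀ n, ‖∑ i ∈ Finset.range n, a i • x i‖ ≤ max H 0 := by
    intro a ha n
    apply NormedSpace.norm_le_dual_bound ℝ _ H0
    intro f
    have : f (∑ i ∈ Finset.range n, a i • x i) = ∑ i ∈ Finset.range n, a i * f (x i) := by
      rw [map_sum]
      exact Finset.sum_congr rfl fun i _ => by rw [map_smul]; rfl
    rw [this]
    have heq : ∑ i ∈ Finset.range n, a i * f (x i) = g (n, a) f := by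
      rw [hgapp]
      exact Finset.sum_congr rfl fun i _ => by rw [hcleq _ (ha i)]
    rw [heq, Real.norm_eq_abs]
    calc |g (n, a) f| ≤ ‖g (n, a)‖ * ‖f‖ := (g (n, a)).le_opNorm f
    _ ≤ H * ‖f‖ := mul_le_mul_of_nonneg_right (hH _) (norm_nonneg _)
    _ ≤ max H 0 * ‖f‖ := mul_le_mul_of_nonneg_right (le_max_left _ _) (norm_nonneg _)
  refine ⟨max H 0, H0, ?_⟩
  intro a C hC ha n
  rcases eq_or_lt_of_le hC with h0 | h0
  · have haz : ∀ i, a i = 0 := by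
      intro i
      have := ha i
      rw [← h0] at this
      exact abs_nonpos_iff.1 this
    have : ∑ i ∈ Finset.range n, a i • x i = 0 :=
      Finset.sum_eq_zero fun i _ => by rw [haz i, zero_smul]
    rw [this, norm_zero]
    exact mul_nonneg H0 hC
  · have key : ∑ i ∈ Finset.range n, a i • x i
        = C • ∑ i ∈ Finset.range n, (a i / C) • x i := by
      rw [Finset.smul_sum]
      refine Finset.sum_congr rfl fun i _ => ?_
      rw [smul_smul]
      congr 1
      field_simp
    rw [key, norm_smul, Real.norm_eq_abs, abs_of_pos h0, mul_comm]
    apply mul_le_mul_of_nonneg_right _ h0.le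
    apply unit
    intro i
    rw [abs_div, abs_of_pos h0, div_le_one h0]
    exact ha i

end Bound


section NotWuc

private lemma real_sign_mul_self (t : ℝ) : Real.sign t * t = |t| := by
  rcases lt_trichotomy t 0 with h | h | h
  · rw [Real.sign_of_neg h, abs_of_neg h]; ring
  · simp [h]
  · rw [Real.sign_of_pos h, abs_of_pos h]; ring

private lemma real_sign_abs_le (t : ℝ) : |Real.sign t| ≤ 1 := by
  rcases lt_trichotomy t 0 with h | h | h
  · rw [Real.sign_of_neg h]; norm_num
  · simp [h]
  · rw [Real.sign_of_pos h]; norm_num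

private lemma real_sqrt_tendsto_atTop : Tendsto Real.sqrt atTop atTop := by
  apply tendsto_atTop_atTop.2
  intro b
  refine ⟨b ^ 2, fun c hc => ?_⟩
  calc b ≤ |b| := le_abs_self b
  _ = Real.sqrt (b ^ 2) := (Real.sqrt_sq_eq_abs b).symm
  _ ≤ Real.sqrt c := Real.sqrt_le_sqrt hc

variable {X : Type*} [NormedAddCommGroup X] [NormedSpace ℝ X] {θ : ℕ → ℕ}

private lemma not_wuc_bad (hθ : IsLacunary θ) {x : ℕ → X} (hx : ¬ WUCSeries x) :
    ∃ a : ℕ → ℝ, Tendsto a atTop (nhds 0) ∧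
      ∀ L : X, ¬ NthetaSummable θ (fun n => ∑ i ∈ Finset.range n, a i • x i) L := by
  simp only [WUCSeries, not_forall] at hx
  obtain ⟨f, hf⟩ := hx
  set u : ℕ → ℝ := fun i => |f (x i)| with hu
  have hu0 : ∀ i, 0 ≤ u i := fun i => abs_nonneg _
  set T : ℕ → ℝ := fun n => ∑ i ∈ Finset.range n, u i with hTdef
  have hT : Tendsto T atTop atTop :=
    (not_summable_iff_tendsto_nat_atTop_of_nonneg hu0).1 hf
  have hT0 : ∀ n, 0 ≤ T n := fun n => Finset.sum_nonneg fun i _ => hu0 i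
  have hTsucc : ∀ n, T (n + 1) = T n + u n := fun n => Finset.sum_range_succ _ _
  have h1T : ∀ n, (0:ℝ) < 1 + T n := fun n => by have := hT0 n; linarith
  have hsq : ∀ n, (0:ℝ) < Real.sqrt (1 + T n) := fun n => Real.sqrt_pos.2 (h1T n)
  have hTm : Monotone T := monotone_nat_of_le_succ fun n => by
    rw [hTsucc n]; have := hu0 n; linarith
  set a : ℕ → ℝ := fun i => Real.sign (f (x i)) / Real.sqrt (1 + T (i + 1)) with ha
  -- `a` tends to zero
  have hinv : Tendsto (fun i : ℕ => (Real.sqrt (1 + T (i + 1)))⁻¹) atTop (nhds 0) := by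
    apply Tendsto.inv_tendsto_atTop
    apply real_sqrt_tendsto_atTop.comp
    apply tendsto_atTop_add_const_left
    exact hT.comp (tendsto_add_atTop_nat 1)
  have haten : Tendsto a atTop (nhds 0) := by
    apply squeeze_zero_norm (a := fun i : ℕ => (Real.sqrt (1 + T (i + 1)))⁻¹) _ hinv
    intro i
    rw [ha, Real.norm_eq_abs]
    simp only
    rw [abs_div, abs_of_pos (hsq (i + 1)), ← one_div]
    exact div_le_div₀ (zero_le_one) (real_sign_abs_le _) (hsq (i+1)) le_rfl
  -- partial sums under f
  set P : ℕ → X := fun n => ∑ i ∈ Finset.range n, a i • x i with hP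
  have hfP : ∀ n, f (P n) = ∑ i ∈ Finset.range n, u i / Real.sqrt (1 + T (i + 1)) := by
    intro n
    rw [hP]
    simp only
    rw [map_sum]
    refine Finset.sum_congr rfl fun i _ => ?_
    rw [map_smul]
    show a i * f (x i) = _
    rw [ha]
    simp only
    rw [div_mul_eq_mul_div, real_sign_mul_self]
  have hterm : ∀ i, Real.sqrt (1 + T (i + 1)) - Real.sqrt (1 + T i)
      ≤ u i / Real.sqrt (1 + T (i + 1)) := by
    intro i
    rw [le_div_iff₀ (hsq (i + 1))]
    have h1 : Real.sqrt (1 + T (i+1)) * Real.sqrt (1 + T (i+1)) = 1 + T (i+1) :=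
      Real.mul_self_sqrt (h1T _).le
    have h2 : Real.sqrt (1 + T i) * Real.sqrt (1 + T i) = 1 + T i :=
      Real.mul_self_sqrt (h1T _).le
    have h3 : Real.sqrt (1 + T i) * Real.sqrt (1 + T i)
        ≤ Real.sqrt (1 + T i) * Real.sqrt (1 + T (i+1)) := by
      apply mul_le_mul_of_nonneg_left _ (hsq i).le
      exact Real.sqrt_le_sqrt (by have := hTm (Nat.le_succ i); linarith)
    have h4 := hTsucc i
    nlinarith [hsq i, hsq (i+1)]
  have hlow : ∀ n, Real.sqrt (1 + T n) - Real.sqrt (1 + T 0) ≤ f (P n) := by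
    intro n
    rw [hfP]
    calc Real.sqrt (1 + T n) - Real.sqrt (1 + T 0)
        = ∑ i ∈ Finset.range n,
            (Real.sqrt (1 + T (i + 1)) - Real.sqrt (1 + T i)) :=
          (Finset.sum_range_sub (fun i => Real.sqrt (1 + T i)) n).symm
      _ ≤ ∑ i ∈ Finset.range n, u i / Real.sqrt (1 + T (i + 1)) :=
          Finset.sum_le_sum fun i _ => hterm i
  have hfP_atTop : Tendsto (fun n => f (P n)) atTop atTop := by
    apply tendsto_atTop_mono hlow
    have : Tendsto (fun n => Real.sqrt (1 + T n)) atTop atTop :=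
      real_sqrt_tendsto_atTop.comp (tendsto_atTop_add_const_left _ _ hT)
    simpa [sub_eq_add_neg] using tendsto_atTop_add_const_right _ (-(Real.sqrt (1 + T 0))) this
  refine ⟨a, haten, ?_⟩
  intro L hL
  rw [ntheta_iff] at hL
  have hsel : ∀ r, ∃ k ∈ Finset.Ioc (θ r) (θ (r + 1)),
      ‖P k - L‖ ≤ lacAvg θ r (fun k => ‖P k - L‖) :=
    fun r => exists_le_lacAvg hθ r _
  choose K hK1 hK2 using hsel
  have hKatTop : Tendsto K atTop atTop := by
    apply tendsto_atTop_mono _ tendsto_id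
    intro r
    exact le_of_lt (lt_of_le_of_lt hθ.2.1.le_apply (Finset.mem_Ioc.1 (hK1 r)).1)
  have hPK : Tendsto (fun r => P (K r)) atTop (nhds L) := by
    rw [tendsto_iff_norm_sub_tendsto_zero]
    exact squeeze_zero (fun r => norm_nonneg _) hK2 hL
  have h1 : Tendsto (fun r => f (P (K r))) atTop (nhds (f L)) :=
    (f.continuous.tendsto L).comp hPK
  have h2 : Tendsto (fun r => f (P (K r))) atTop atTop := hfP_atTop.comp hKatTop
  exact not_tendsto_atTop_of_tendsto_nhds h1 h2

end NotWuc


section MainParts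

variable {X : Type*} [NormedAddCommGroup X] [NormedSpace ℝ X] {θ : ℕ → ℕ}

private lemma sum_Ico_eq_range_if (a : ℕ → ℝ) (x : ℕ → X) (m n : ℕ) :
    ∑ i ∈ Finset.Ico m n, a i • x i
      = ∑ i ∈ Finset.range n, (if m ≤ i then a i else 0) • x i := by
  calc ∑ i ∈ Finset.Ico m n, a i • x i
      = ∑ i ∈ Finset.Ico m n, (if m ≤ i then a i else 0) • x i :=
        Finset.sum_congr rfl fun i hi => by rw [if_pos (Finset.mem_Ico.1 hi).1]
    _ = ∑ i ∈ Finset.range n, (if m ≤ i then a i else 0) • x i := by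
        apply Finset.sum_subset
        · intro i hi
          exact Finset.mem_range.2 (Finset.mem_Ico.1 hi).2
        · intro i hi hni
          have : ¬ m ≤ i := fun hmi =>
            hni (Finset.mem_Ico.2 ⟨hmi, Finset.mem_range.1 hi⟩)
          rw [if_neg this, zero_smul]

private lemma wuc_to_c0 [CompleteSpace X] (hθ : IsLacunary θ) {x : ℕ → X}
    (hx : WUCSeries x) (a : ℕ → ℝ) (ha : Tendsto a atTop (nhds 0)) :
    ∃ L : X, NthetaSummable θ (fun n => ∑ i ∈ Finset.range n, a i • x i) L := by
  obtain ⟨H, H0, hH⟩ := wuc_bound hx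
  have hcauchy : CauchySeq (fun n => ∑ i ∈ Finset.range n, a i • x i) := by
    rw [Metric.cauchySeq_iff']
    intro ε hε
    obtain ⟨N, hN⟩ := (Metric.tendsto_atTop.1 ha) (ε / (2 * (H + 1))) (by positivity)
    refine ⟨N, fun n hn => ?_⟩
    rw [dist_eq_norm, ← Finset.sum_Ico_eq_sub _ hn, sum_Ico_eq_range_if]
    have hb : ∀ i, |if N ≤ i then a i else 0| ≤ ε / (2 * (H + 1)) := by
      intro i
      by_cases hi : N ≤ i
      · rw [if_pos hi]
        have := hN i hi
        rw [Real.dist_eq, sub_zero] at this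
        exact this.le
      · rw [if_neg hi, abs_zero]; positivity
    calc ‖∑ i ∈ Finset.range n, (if N ≤ i then a i else 0) • x i‖
        ≤ H * (ε / (2 * (H + 1))) := hH _ _ (by positivity) hb n
      _ < ε := by
          rw [← mul_div_assoc, div_lt_iff₀ (by positivity : (0:ℝ) < 2 * (H + 1))]
          nlinarith
  obtain ⟨L, hL⟩ := cauchySeq_tendsto_of_complete hcauchy
  exact ⟨L, ntheta_of_tendsto hθ hL⟩

private lemma norm_sub_le_three (A B L M : X) :
    ‖L - M‖ ≤ ‖A - L‖ + (‖B - M‖ + ‖A - B‖) := by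
  have e : L - M = (-(A - L) + (B - M)) + (A - B) := by abel
  calc ‖L - M‖ = ‖(-(A - L) + (B - M)) + (A - B)‖ := by rw [← e]
    _ ≤ ‖-(A - L) + (B - M)‖ + ‖A - B‖ := norm_add_le _ _
    _ ≤ (‖-(A - L)‖ + ‖B - M‖) + ‖A - B‖ := by
        have := norm_add_le (-(A - L)) (B - M)
        linarith
    _ = ‖A - L‖ + (‖B - M‖ + ‖A - B‖) := by rw [norm_neg]; ring

private lemma lacAvg_split (hθ : IsLacunary θ) (r : ℕ) (f g : ℕ → ℝ) (c : ℝ) :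
    lacAvg θ r (fun k => f k + (g k + c)) = lacAvg θ r f + (lacAvg θ r g + c) := by
  have h0 := (lac_pos hθ r).ne'
  simp only [lacAvg, Finset.sum_add_distrib, Finset.sum_const, nsmul_eq_mul, lac_card hθ r]
  field_simp

private lemma lacAvg_add_const (hθ : IsLacunary θ) (r : ℕ) (f : ℕ → ℝ) (c : ℝ) :
    lacAvg θ r (fun k => f k + c) = lacAvg θ r f + c := by
  have h0 := (lac_pos hθ r).ne'
  simp only [lacAvg, Finset.sum_add_distrib, Finset.sum_const, nsmul_eq_mul, lac_card hθ r]
  field_simp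

private lemma wuc_isComplete [CompleteSpace X] (hθ : IsLacunary θ) {x : ℕ → X}
    (hx : WUCSeries x) : IsComplete (NthetaSummabilitySpace θ x) := by
  obtain ⟨H, H0, hH⟩ := wuc_bound hx
  have Pdiff : ∀ (c d : lp (fun _ : ℕ => ℝ) ⊤) (n : ℕ),
      ‖(∑ i ∈ Finset.range n, c i • x i) - ∑ i ∈ Finset.range n, d i • x i‖
        ≤ H * ‖c - d‖ := by
    intro c d n
    have e : (∑ i ∈ Finset.range n, c i • x i) - ∑ i ∈ Finset.range n, d i • x i
        = ∑ i ∈ Finset.range n, (c i - d i) • x i := by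
      rw [← Finset.sum_sub_distrib]
      exact Finset.sum_congr rfl fun i _ => (sub_smul _ _ _).symm
    rw [e]
    apply hH _ _ (norm_nonneg _) _ n
    intro i
    have h2 := lp.norm_apply_le_norm (by norm_num : (⊤ : ENNReal) ≠ 0) (c - d) i
    rwa [lp.coeFn_sub, Pi.sub_apply, Real.norm_eq_abs] at h2
  apply IsClosed.isComplete
  apply isClosed_of_closure_subset
  intro A hA
  obtain ⟨b, hb, hbA⟩ := mem_closure_iff_seq_limit.1 hA
  simp only [NthetaSummabilitySpace, Set.mem_setOf_eq] at hb
  choose L hL using hb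
  simp only [ntheta_iff] at hL
  -- `L` is a Cauchy sequence in `X`
  have hLd : ∀ n m, ‖L n - L m‖ ≤ H * ‖b n - b m‖ := by
    intro n m
    have key : ∀ r, ‖L n - L m‖ ≤
        lacAvg θ r (fun k => ‖(∑ i ∈ Finset.range k, b n i • x i) - L n‖)
        + (lacAvg θ r (fun k => ‖(∑ i ∈ Finset.range k, b m i • x i) - L m‖)
          + H * ‖b n - b m‖) := by
      intro r
      calc ‖L n - L m‖ = lacAvg θ r (fun _ => ‖L n - L m‖) := (lacAvg_const hθ r _).symm
        _ ≤ lacAvg θ r (fun k => ‖(∑ i ∈ Finset.range k, b n i • x i) - L n‖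
            + (‖(∑ i ∈ Finset.range k, b m i • x i) - L m‖ + H * ‖b n - b m‖)) := by
            apply lacAvg_mono hθ r
            intro k _
            have t3 := norm_sub_le_three (∑ i ∈ Finset.range k, b n i • x i)
              (∑ i ∈ Finset.range k, b m i • x i) (L n) (L m)
            have t1 := Pdiff (b n) (b m) k
            linarith
        _ = _ := lacAvg_split hθ r _ _ _
    have hlim : Tendsto (fun r =>
        lacAvg θ r (fun k => ‖(∑ i ∈ Finset.range k, b n i • x i) - L n‖)
        + (lacAvg θ r (fun k => ‖(∑ i ∈ Finset.range k, b m i • x i) - L m‖)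
          + H * ‖b n - b m‖)) atTop (nhds (0 + (0 + H * ‖b n - b m‖))) :=
      (hL n).add ((hL m).add tendsto_const_nhds)
    have := le_of_tendsto_of_tendsto' tendsto_const_nhds hlim key
    simpa using this
  have hLC : CauchySeq L := by
    have hbC : CauchySeq b := hbA.cauchySeq
    rw [Metric.cauchySeq_iff] at hbC ⊢
    intro ε hε
    obtain ⟨N, hN⟩ := hbC (ε / (H + 1)) (by positivity)
    refine ⟨N, fun m hm n hn => ?_⟩
    have hd := hN m hm n hn
    rw [dist_eq_norm] at hd ⊢
    calc ‖L m - L n‖ ≤ H * ‖b m - b n‖ := hLd m n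
      _ ≤ H * (ε / (H + 1)) := mul_le_mul_of_nonneg_left hd.le H0
      _ < ε := by
          rw [← mul_div_assoc, div_lt_iff₀ (by positivity : (0:ℝ) < H + 1)]
          nlinarith
  obtain ⟨Linf, hLinf⟩ := cauchySeq_tendsto_of_complete hLC
  refine ⟨Linf, ?_⟩
  rw [ntheta_iff, Metric.tendsto_atTop]
  intro ε hε
  have e1 : ∀ᶠ n in atTop, dist (b n) A < ε / (3 * (H + 1)) :=
    hbA (Metric.ball_mem_nhds A (by positivity))
  have e2 : ∀ᶠ n in atTop, dist (L n) Linf < ε / 3 :=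
    hLinf (Metric.ball_mem_nhds Linf (by positivity))
  obtain ⟨n, hn1, hn2⟩ := (e1.and e2).exists
  obtain ⟨N, hN⟩ := (Metric.tendsto_atTop.1 (hL n)) (ε / 3) (by positivity)
  refine ⟨N, fun r hr => ?_⟩
  have havg := hN r hr
  rw [Real.dist_eq, sub_zero] at havg
  have havg' : lacAvg θ r (fun k => ‖(∑ i ∈ Finset.range k, b n i • x i) - L n‖) < ε / 3 :=
    lt_of_le_of_lt (le_abs_self _) havg
  have hd1 : ‖b n - A‖ < ε / (3 * (H + 1)) := by rwa [← dist_eq_norm]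
  have hd2 : ‖L n - Linf‖ < ε / 3 := by rwa [← dist_eq_norm]
  have hpoint : ∀ k ∈ Finset.Ioc (θ r) (θ (r + 1)),
      ‖(∑ i ∈ Finset.range k, A i • x i) - Linf‖
        ≤ ‖(∑ i ∈ Finset.range k, b n i • x i) - L n‖ + (H * (ε / (3 * (H + 1))) + ε / 3) := by
    intro k _
    have t3 := norm_sub_le_three (∑ i ∈ Finset.range k, b n i • x i) (L n)
      (∑ i ∈ Finset.range k, A i • x i) Linf
    have t1 := Pdiff (b n) A k
    have t1' : ‖(∑ i ∈ Finset.range k, b n i • x i) - ∑ i ∈ Finset.range k, A i • x i‖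
        ≤ H * (ε / (3 * (H + 1))) :=
      t1.trans (mul_le_mul_of_nonneg_left hd1.le H0)
    linarith
  have hbound : lacAvg θ r (fun k => ‖(∑ i ∈ Finset.range k, A i • x i) - Linf‖)
      ≤ lacAvg θ r (fun k => ‖(∑ i ∈ Finset.range k, b n i • x i) - L n‖)
        + (H * (ε / (3 * (H + 1))) + ε / 3) := by
    calc lacAvg θ r (fun k => ‖(∑ i ∈ Finset.range k, A i • x i) - Linf‖)
        ≤ lacAvg θ r (fun k => ‖(∑ i ∈ Finset.range k, b n i • x i) - L n‖
            + (H * (ε / (3 * (H + 1))) + ε / 3)) := lacAvg_mono hθ r hpoint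
      _ = _ := lacAvg_add_const hθ r _ _
  have hnn : 0 ≤ lacAvg θ r (fun k => ‖(∑ i ∈ Finset.range k, A i • x i) - Linf‖) :=
    lacAvg_nonneg hθ r fun k _ => norm_nonneg _
  rw [Real.dist_eq, sub_zero, abs_of_nonneg hnn]
  have hHd : H * (ε / (3 * (H + 1))) < ε / 3 := by
    rw [← mul_div_assoc, div_lt_div_iff₀ (by positivity : (0:ℝ) < 3 * (H + 1)) (by norm_num : (0:ℝ) < 3)]
    nlinarith
  linarith

private lemma isComplete_to_wuc (hθ : IsLacunary θ) {x : ℕ → X}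
    (hc : IsComplete (NthetaSummabilitySpace θ x)) : WUCSeries x := by
  by_contra hx
  obtain ⟨a, ha0, hbad⟩ := not_wuc_bad hθ hx
  have hbdd : BddAbove (Set.range fun i => ‖a i‖) := by
    have : Tendsto (fun i => ‖a i‖) atTop (nhds ‖(0:ℝ)‖) := ha0.norm
    exact this.bddAbove_range
  have hmemA : Memℓp a (⊤ : ENNReal) := memℓp_infty hbdd
  obtain ⟨C, hC⟩ := hbdd
  set A : lp (fun _ : ℕ => ℝ) ⊤ := ⟨a, hmemA⟩ with hAdef
  have hmemB : ∀ n : ℕ, Memℓp (fun i => if i < n then a i else 0) (⊤ : ENNReal) := by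
    intro n
    apply memℓp_infty
    refine ⟨max C 0, ?_⟩
    rintro y ⟨i, rfl⟩
    by_cases hi : i < n
    · simp only [if_pos hi]
      exact le_trans (hC ⟨i, rfl⟩) (le_max_left _ _)
    · simp only [if_neg hi, norm_zero]
      exact le_max_right _ _
  set B : ℕ → lp (fun _ : ℕ => ℝ) ⊤ := fun n => ⟨fun i => if i < n then a i else 0, hmemB n⟩
    with hBdef
  have hBmem : ∀ n, B n ∈ NthetaSummabilitySpace θ x := by
    intro n
    refine ⟨∑ i ∈ Finset.range n, a i • x i, ?_⟩
    apply ntheta_of_tendsto hθ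
    apply tendsto_atTop_of_eventually_const (i₀ := n)
    intro k hk
    show ∑ i ∈ Finset.range k, (if i < n then a i else 0) • x i
        = ∑ i ∈ Finset.range n, a i • x i
    calc ∑ i ∈ Finset.range k, (if i < n then a i else 0) • x i
        = ∑ i ∈ Finset.range n, (if i < n then a i else 0) • x i := by
          symm
          apply Finset.sum_subset (Finset.range_subset_range.2 hk)
          intro i _ hni
          rw [if_neg (fun h => hni (Finset.mem_range.2 h)), zero_smul]
      _ = ∑ i ∈ Finset.range n, a i • x i :=
          Finset.sum_congr rfl fun i hi => by rw [if_pos (Finset.mem_range.1 hi)]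
  have hBA : Tendsto B atTop (nhds A) := by
    rw [Metric.tendsto_atTop]
    intro ε hε
    obtain ⟨N, hN⟩ := (Metric.tendsto_atTop.1 ha0) (ε / 2) (by positivity)
    refine ⟨N, fun n hn => ?_⟩
    rw [dist_eq_norm]
    have hle : ‖B n - A‖ ≤ ε / 2 := by
      apply lp.norm_le_of_forall_le (by positivity)
      intro i
      rw [lp.coeFn_sub, Pi.sub_apply]
      show ‖(if i < n then a i else 0) - a i‖ ≤ ε / 2
      by_cases hi : i < n
      · rw [if_pos hi, sub_self, norm_zero]; positivity
      · rw [if_neg hi, zero_sub, norm_neg]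
        have hiN : N ≤ i := le_trans hn (not_lt.1 hi)
        have := hN i hiN
        rw [Real.dist_eq, sub_zero] at this
        exact le_of_lt (by rwa [Real.norm_eq_abs])
    linarith
  obtain ⟨cpt, hcptS, hBcpt⟩ := cauchySeq_tendsto_of_isComplete hc hBmem hBA.cauchySeq
  have hAc : cpt = A := tendsto_nhds_unique hBcpt hBA
  rw [hAc] at hcptS
  obtain ⟨L, hL⟩ := hcptS
  exact hbad L hL

end MainParts

/-- Characterization of wuC series via the `N_θ`-summability space. -/
theorem wuc_iff_nthetaSummabilitySpace_complete {X : Type*} [NormedAddCommGroup X]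
    [NormedSpace ℝ X] [CompleteSpace X] (θ : ℕ → ℕ) (hθ : IsLacunary θ) (x : ℕ → X) :
    (WUCSeries x ↔ IsComplete (NthetaSummabilitySpace θ x)) ∧
    (WUCSeries x ↔ ∀ a : ℕ → ℝ, Tendsto a atTop (nhds 0) →
      ∃ L : X, NthetaSummable θ (fun n => ∑ i ∈ Finset.range n, a i • x i) L) := by
  constructor
  · exact ⟨fun h => wuc_isComplete hθ h, fun h => isComplete_to_wuc hθ h⟩
  · constructor
    · intro h a ha
      exact wuc_to_c0 hθ h a ha
    · intro h
      by_contra hx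
      obtain ⟨a, ha0, hbad⟩ := not_wuc_bad hθ hx
      obtain ⟨L, hL⟩ := h a ha0
      exact hbad L hL
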